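/- Let r be a natural number and let c : (Fin r → ℤ) →₀ ℂ be a finitely supported family of complex coefficients. Suppose that for every z : Fin r → ℂ with ‖z i‖ = 1 for all i, the Laurent polynomial sum ∑_{n ∈ supp(c)} c(n) · ∏_i (z i)^{n i} equals 0 (integer power z^{n i} is the zpow, well defined since each z i is nonzero). Then c = 0. -/

import Mathlib

open Finset

lemma circle_coe_zpow (z : Circle) (k : ℤ) : ((z ^ k : Circle) : ℂ) = (z : ℂ) ^ k := by
  have hp : ∀ m : ℕ, ((z ^ m : Circle) : ℂ) = (z : ℂ) ^ m := fun m => by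
    exact Circle.coe_pow z m
  cases k with
  | ofNat m => simpa [zpow_natCast] using hp m
  | negSucc m => rw [zpow_negSucc, Circle.coe_inv, hp, zpow_negSucc]

/-- The character on the torus associated to an exponent vector. -/
noncomputable def torusChar {r : ℕ} (n : Fin r → ℤ) : (Fin r → Circle) →* ℂ :=
  Circle.coeHom.comp (∏ i, (zpowGroupHom (n i)).comp (Pi.evalMonoidHom (fun _ => Circle) i))

lemma torusChar_apply {r : ℕ} (n : Fin r → ℤ) (z : Fin r → Circle) :
    torusChar n z = ∏ i, (z i : ℂ) ^ n i := by
  simp only [torusChar, MonoidHom.comp_apply, MonoidHom.finset_prod_apply, map_prod]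
  simp [zpowGroupHom, circle_coe_zpow]
  rfl

lemma torusChar_injective {r : ℕ} : Function.Injective (torusChar (r := r)) := by
  intro n m hnm
  funext j
  by_contra hj
  set d : ℤ := n j - m j with hd
  have hd0 : d ≠ 0 := sub_ne_zero.mpr hj
  set θ : ℝ := Real.pi / d with hθ
  set z : Fin r → Circle := Function.update (fun _ => 1) j (Circle.exp θ) with hz
  have hzj : z j = Circle.exp θ := by simp [hz]
  have hzi : ∀ i, i ≠ j → z i = 1 := fun i hi => by simp [hz, Function.update_of_ne hi]
  have happ := congrArg (fun f => f z) hnm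
  simp only [torusChar_apply] at happ
  have key : ((Circle.exp θ : ℂ)) ^ n j = ((Circle.exp θ : ℂ)) ^ m j := by
    have h1 : ∏ i, (z i : ℂ) ^ n i = (Circle.exp θ : ℂ) ^ n j := by
      rw [Finset.prod_eq_single j]
      · rw [hzj]
      · intro i _ hi; rw [hzi i hi]; simp
      · simp
    have h2 : ∏ i, (z i : ℂ) ^ m i = (Circle.exp θ : ℂ) ^ m j := by
      rw [Finset.prod_eq_single j]
      · rw [hzj]
      · intro i _ hi; rw [hzi i hi]; simp
      · simp
    rw [h1, h2] at happ; exact happ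
  rw [Circle.coe_exp] at key
  rw [← Complex.exp_int_mul, ← Complex.exp_int_mul] at key
  have key2 : Complex.exp ((d : ℂ) * (θ * Complex.I)) = 1 := by
    have : Complex.exp ((n j : ℂ) * (θ * Complex.I)) /
        Complex.exp ((m j : ℂ) * (θ * Complex.I)) = 1 := by
      rw [key, div_self (Complex.exp_ne_zero _)]
    rw [← Complex.exp_sub, ← sub_mul] at this
    have : Complex.exp (((n j : ℂ) - (m j : ℂ)) * (θ * Complex.I)) = 1 := this
    simpa [hd] using this
  rw [Complex.exp_eq_one_iff] at key2
  obtain ⟨k, hk⟩ := key2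
  -- from d * (θ * I) = k * (2π * I) deduce d * θ = 2π k, but d * θ = π
  have hdθ : (d : ℝ) * θ = Real.pi := by
    have hd' : (d : ℝ) ≠ 0 := by exact_mod_cast hd0
    rw [hθ]
    field_simp
  have hre : (d : ℂ) * (θ : ℂ) = (k : ℂ) * (2 * Real.pi) := by
    have hI : ((d : ℂ) * θ) * Complex.I = ((k : ℂ) * (2 * Real.pi)) * Complex.I := by
      linear_combination hk
    exact mul_right_cancel₀ Complex.I_ne_zero hI
  have hreR : (d : ℝ) * θ = (k : ℝ) * (2 * Real.pi) := by exact_mod_cast hre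
  rw [hdθ] at hreR
  have hpi : Real.pi ≠ 0 := Real.pi_ne_zero
  have h1 : (1 : ℝ) * Real.pi = (2 * k) * Real.pi := by linarith [hreR]
  have h2 : (1 : ℝ) = 2 * k := mul_right_cancel₀ hpi h1
  have h2k : (2 * k : ℤ) = 1 := by exact_mod_cast h2.symm
  omega

/-- A complex Laurent polynomial in `r` variables (encoded by its finitely supported
coefficient family `c : (Fin r → ℤ) →₀ ℂ`) which vanishes at every point of the real torus
`(S¹)^r ⊂ (ℂ*)^r` is identically zero. -/
theorem laurent_vanishing_on_torus_eq_zero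
    (r : ℕ) (c : (Fin r → ℤ) →₀ ℂ)
    (h : ∀ z : Fin r → ℂ, (∀ i, ‖z i‖ = 1) →
      ∑ n ∈ c.support, c n * ∏ i, z i ^ n i = 0) :
    c = 0 := by
  have li : LinearIndependent ℂ (fun n : Fin r → ℤ => (torusChar n : (Fin r → Circle) → ℂ)) :=
    (linearIndependent_monoidHom (Fin r → Circle) ℂ).comp torusChar torusChar_injective
  have hsum : ∑ n ∈ c.support, c n • (torusChar n : (Fin r → Circle) → ℂ) = 0 := by
    funext z
    simp only [Finset.sum_apply, Pi.smul_apply, smul_eq_mul, Pi.zero_apply]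
    have hz : ∀ i, ‖((z i : ℂ))‖ = 1 := fun i => by
      exact Circle.norm_coe _
    have := h (fun i => (z i : ℂ)) hz
    simpa only [torusChar_apply] using this
  have hz := linearIndependent_iff'.mp li c.support c hsum
  ext n
  by_cases hn : n ∈ c.support
  · exact hz n hn
  · simpa using Finsupp.notMem_support_iff.mp hn
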